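/- For every positive integer k, the number of n-color compositions of k in which no part has color 2 equals the number of EVEN colored compositions of k. -/

import Mathlib

/-- The number of EVEN colored compositions of `ℓ`: compositions where each part
in an even position `i` (positions counted from 1) gets a color in `{1, …, pᵢ}`,
i.e. `∑` over compositions of `∏` of the parts in even positions. -/
def evenColoredCount (ℓ : ℕ) : ℕ :=
  ∑ c : Composition ℓ, ∏ i ∈ Finset.range c.blocks.length,
    if (i + 1) % 2 = 0 then c.blocks.getD i 1 else 1

/-- The number of n-color compositions of `ℓ` in which no part has color 2:
a part `p = 1` has one allowed color, and a part `p ≥ 2` has `p - 1` allowed colors. -/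
def noColor2Count (ℓ : ℕ) : ℕ :=
  ∑ c : Composition ℓ, (c.blocks.map (fun p => if p = 1 then 1 else p - 1)).prod


open Finset

def fw (p : ℕ) : ℕ := if p = 1 then 1 else p - 1

def Nc : ℕ → ℕ
  | 0 => 1
  | k+1 => ∑ p ∈ (Finset.range (k+1)).attach, fw (k+1-p.1) * Nc p.1
  decreasing_by exact Finset.mem_range.mp p.2

lemma Nc_zero : Nc 0 = 1 := by rw [Nc]

lemma Nc_succ (k : ℕ) : Nc (k+1) = ∑ p ∈ Finset.range (k+1), fw (k+1-p) * Nc p := by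
  rw [Nc, ← Finset.sum_attach (Finset.range (k+1)) (fun p => fw (k+1-p) * Nc p)]

lemma comp_blocks_eq_nil (c : Composition 0) : c.blocks = [] := by
  rcases hb : c.blocks with _ | ⟨a, l⟩
  · rfl
  · exfalso
    have hs := c.blocks_sum
    rw [hb] at hs
    have ha : 0 < a := c.blocks_pos (by rw [hb]; exact List.mem_cons_self)
    simp [List.sum_cons] at hs
    omega

lemma sum_comp_zero (G : List ℕ → ℕ) : ∑ c : Composition 0, G c.blocks = G [] := by
  have hcard : Fintype.card (Composition 0) = 1 :=
    Fintype.card_eq_one_iff.mpr ⟨⟨[], by intro i hi; simp at hi, rfl⟩,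
      fun c => Composition.ext (comp_blocks_eq_nil c)⟩
  have h1 : ∑ c : Composition 0, G c.blocks = ∑ _c : Composition 0, G [] :=
    Finset.sum_congr rfl (fun c _ => by rw [comp_blocks_eq_nil c])
  rw [h1, Finset.sum_const, Finset.card_univ, hcard, one_smul]

lemma comp_heq {a b : ℕ} (c : Composition a) (d : Composition b) (h : c.blocks = d.blocks) :
    HEq c d := by
  obtain ⟨bl, hp, hs⟩ := c
  obtain ⟨bl', hp', hs'⟩ := d
  simp only at h
  subst h
  subst hs
  subst hs'
  rfl

def toSig {k : ℕ} (c : Composition (k+1)) : Σ p : ℕ, Composition p :=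
  ⟨c.blocks.tail.sum, ⟨c.blocks.tail, fun hi => c.blocks_pos (List.mem_of_mem_tail hi), rfl⟩⟩

def ofSig (k : ℕ) (x : Σ p : ℕ, Composition p) (hx : x.1 < k+1) : Composition (k+1) where
  blocks := (k+1-x.1) :: x.2.blocks
  blocks_pos := by
    intro i hi
    rcases List.mem_cons.mp hi with h | h
    · omega
    · exact x.2.blocks_pos h
  blocks_sum := by rw [List.sum_cons, x.2.blocks_sum]; omega

lemma blocks_cons {k : ℕ} (c : Composition (k+1)) :
    c.blocks = (k + 1 - c.blocks.tail.sum) :: c.blocks.tail ∧ c.blocks.tail.sum < k + 1 := by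
  rcases hb : c.blocks with _ | ⟨a, l⟩
  · exfalso
    have hs := c.blocks_sum
    rw [hb] at hs
    simp at hs
  · have hs := c.blocks_sum
    rw [hb, List.sum_cons] at hs
    have ha : 0 < a := c.blocks_pos (by rw [hb]; exact List.mem_cons_self)
    constructor
    · simp only [List.tail_cons]
      congr 1
      omega
    · simp only [List.tail_cons]
      omega

lemma sum_comp_succ (k : ℕ) (G : List ℕ → ℕ) :
    ∑ c : Composition (k+1), G c.blocks
      = ∑ p ∈ Finset.range (k+1), ∑ c : Composition p, G ((k+1-p) :: c.blocks) := by
  rw [← Finset.sum_sigma (Finset.range (k+1)) (fun p => (Finset.univ : Finset (Composition p)))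
      (fun x => G ((k+1-x.1) :: x.2.blocks))]
  refine Finset.sum_bij' (fun c _ => toSig c)
    (fun x hx => ofSig k x (Finset.mem_range.mp (Finset.mem_sigma.mp hx).1))
    (fun c _ => ?_) (fun x hx => Finset.mem_univ _) (fun c _ => ?_) (fun x hx => ?_)
    (fun c _ => ?_)
  · exact Finset.mem_sigma.mpr ⟨Finset.mem_range.mpr (blocks_cons c).2, Finset.mem_univ _⟩
  · -- j (i c) = c
    apply Composition.ext
    show (k + 1 - (toSig c).1) :: (toSig c).2.blocks = c.blocks
    exact ((blocks_cons c).1).symm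
  · -- i (j x) = x
    have hx1 : x.1 < k + 1 := Finset.mem_range.mp (Finset.mem_sigma.mp hx).1
    refine Sigma.ext ?_ ?_
    · show ((k+1-x.1) :: x.2.blocks).tail.sum = x.1
      simp [x.2.blocks_sum]
    · refine comp_heq _ _ ?_
      show ((k+1-x.1) :: x.2.blocks).tail = x.2.blocks
      rfl
  · -- G agrees
    exact congrArg G (blocks_cons c).1

lemma Nc_one : Nc 1 = 1 := by
  rw [Nc_succ]
  simp [fw, Nc_zero]

lemma noColor2_eq_Nc (k : ℕ) : noColor2Count k = Nc k := by
  induction k using Nat.strong_induction_on with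
  | _ k ih =>
    match k with
    | 0 =>
      rw [noColor2Count]
      simp only [show (fun p => if p = 1 then 1 else p - 1) = fw from rfl]
      rw [sum_comp_zero (fun l => (l.map fw).prod), Nc_zero]
      rfl
    | k+1 =>
      rw [noColor2Count]
      simp only [show (fun p => if p = 1 then 1 else p - 1) = fw from rfl]
      rw [sum_comp_succ k (fun l => (l.map fw).prod), Nc_succ]
      apply Finset.sum_congr rfl
      intro p hp
      have hp' : p < k + 1 := Finset.mem_range.mp hp
      have : ∀ c : Composition p, (((k+1-p) :: c.blocks).map fw).prod
          = fw (k+1-p) * (c.blocks.map fw).prod := by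
        intro c
        rw [List.map_cons, List.prod_cons]
      rw [Finset.sum_congr rfl (fun c _ => this c), ← Finset.mul_sum]
      rw [show (∑ c : Composition p, (c.blocks.map fw).prod) = noColor2Count p from rfl]
      rw [ih p hp']

def ECw (s : ℕ) (l : List ℕ) : ℕ :=
  ∏ i ∈ Finset.range l.length, if (i + s) % 2 = 1 then l.getD i 1 else 1

def EC (s ℓ : ℕ) : ℕ := ∑ c : Composition ℓ, ECw s c.blocks

lemma ECw_nil (s : ℕ) : ECw s [] = 1 := by rw [ECw]; rfl

lemma ECw_cons (s p : ℕ) (l : List ℕ) :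
    ECw s (p :: l) = (if s % 2 = 1 then p else 1) * ECw (s+1) l := by
  rw [ECw, ECw]
  rw [show (p::l).length = l.length + 1 from rfl, Finset.prod_range_succ']
  rw [mul_comm]
  congr 1
  · simp
  · apply Finset.prod_congr rfl
    intro i _
    have h2 : i + 1 + s = i + (s+1) := by omega
    rw [show (p::l).getD (i+1) 1 = l.getD i 1 from rfl, h2]

lemma ECw_two (l : List ℕ) : ECw 2 l = ECw 0 l := by
  rw [ECw, ECw]
  apply Finset.prod_congr rfl
  intro i _
  exact if_congr (by omega) rfl rfl

lemma EC_two (m : ℕ) : EC 2 m = EC 0 m :=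
  Finset.sum_congr rfl (fun c _ => ECw_two c.blocks)

def Bf (k : ℕ) : ℕ := if k = 0 then 1 else ∑ j ∈ Finset.range k, (k - j) * Nc j

lemma Nc_step (k : ℕ) : Nc (k+2) = Nc (k+1) + ∑ j ∈ Finset.range (k+1), (k+1-j) * Nc j := by
  rw [Nc_succ (k+1), Finset.sum_range_succ]
  have h1 : fw (k+1+1-(k+1)) = 1 := by
    rw [show k+1+1-(k+1) = 1 from by omega]
    simp [fw]
  rw [h1, one_mul, add_comm]
  congr 1
  apply Finset.sum_congr rfl
  intro p hp
  have hp' : p < k + 1 := Finset.mem_range.mp hp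
  have : fw (k+1+1-p) = k+1-p := by
    rw [fw]
    rw [if_neg (by omega)]
    omega
  rw [this]

lemma sumB (k : ℕ) : ∑ p ∈ Finset.range (k+1), Bf p = Nc (k+1) := by
  induction k with
  | zero => simp [Bf, Nc_one]
  | succ k ih =>
    rw [Finset.sum_range_succ, ih, Bf, if_neg (Nat.succ_ne_zero k)]
    exact (Nc_step k).symm

lemma EC_eq (k : ℕ) : EC 0 k = Nc k ∧ EC 1 k = Bf k := by
  induction k using Nat.strong_induction_on with
  | _ k ih =>
    match k with
    | 0 =>
      constructor
      · rw [EC, sum_comp_zero (ECw _), ECw_nil, Nc_zero]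
      · rw [EC, sum_comp_zero (ECw _), ECw_nil, Bf, if_pos rfl]
    | k+1 =>
      have hsplit : ∀ s, EC s (k+1)
          = ∑ p ∈ Finset.range (k+1), (if s % 2 = 1 then (k+1-p) else 1) * EC (s+1) p := by
        intro s
        rw [EC, sum_comp_succ k (ECw s)]
        apply Finset.sum_congr rfl
        intro p hp
        rw [Finset.sum_congr rfl (fun c _ => ECw_cons s (k+1-p) c.blocks), ← Finset.mul_sum]
        rfl
      constructor
      · rw [hsplit 0]
        have : ∀ p ∈ Finset.range (k+1), (if 0 % 2 = 1 then (k+1-p) else 1) * EC (0+1) p = Bf p := by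
          intro p hp
          rw [if_neg (by omega), one_mul]
          exact (ih p (Finset.mem_range.mp hp)).2
        rw [Finset.sum_congr rfl this, sumB]
      · rw [hsplit 1]
        rw [Bf, if_neg (Nat.succ_ne_zero k)]
        apply Finset.sum_congr rfl
        intro p hp
        rw [if_pos (by omega)]
        rw [show (1+1 : ℕ) = 2 from rfl, EC_two, (ih p (Finset.mem_range.mp hp)).1]

theorem noColor2Count_eq_evenColoredCount (k : ℕ) (hk : 0 < k) :
    noColor2Count k = evenColoredCount k := by
  have h2 : evenColoredCount k = EC 0 k := by
    rw [evenColoredCount, EC]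
    apply Finset.sum_congr rfl
    intro c _
    rw [ECw]
    apply Finset.prod_congr rfl
    intro i _
    exact if_congr (by omega) rfl rfl
  rw [noColor2_eq_Nc, h2, (EC_eq k).1]
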